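/- Let U be a normal κ-complete ultrafilter on a measurable cardinal κ. For every function f : [κ]^{<ω} → 2 there is a set H ∈ U and a function g : ω → 2 such that for every finite subset s of H, f(s) = g(|s|); that is, the value of f on finite subsets of H depends only on their cardinality. -/
import Mathlib


open Cardinal

/-- Rowbottom partition property for `[κ]^{<ω}`: for a normal
κ-complete ultrafilter U on a measurable κ and `f : [κ]^{<ω} → 2`, there is
`H ∈ U` such that the value of `f` on finite subsets of `H` depends only on
their cardinality. -/
theorem rowbottom_finite_subsets
    (κ : Cardinal.{0}) (hκ : ℵ₀ < κ)
    (U : Set (Set {α : Ordinal // α < κ.ord}))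
    (h_ultra : ∀ A : Set {α : Ordinal // α < κ.ord}, A ∈ U ∨ Aᶜ ∈ U)
    (h_proper : (∅ : Set {α : Ordinal // α < κ.ord}) ∉ U)
    (h_up : ∀ A B : Set {α : Ordinal // α < κ.ord}, A ∈ U → A ⊆ B → B ∈ U)
    (h_complete : ∀ (ι : Type) (A : ι → Set {α : Ordinal // α < κ.ord}),
      Nonempty ι → #ι < κ → (∀ i, A i ∈ U) → (⋂ i, A i) ∈ U)
    (h_normal : ∀ (f : {α : Ordinal // α < κ.ord} → Ordinal)
      (S : Set {α : Ordinal // α < κ.ord}), S ∈ U →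
      (∀ β ∈ S, β.1 ≠ 0 → f β < β.1) → ∃ γ, {β | β ∈ S ∧ f β = γ} ∈ U)
    (f : Finset {α : Ordinal // α < κ.ord} → Fin 2) :
    ∃ H ∈ U, ∃ g : ℕ → Fin 2,
      ∀ s : Finset {α : Ordinal // α < κ.ord}, ↑s ⊆ H → f s = g s.card := by
  have hX : True := trivial
  -- basic facts
  have huniv : (Set.univ : Set {α : Ordinal // α < κ.ord}) ∈ U := by
    rcases h_ultra ∅ with h | h
    · exact absurd h h_proper
    · simpa using h
  have hinter : ∀ A B : Set {α : Ordinal // α < κ.ord}, A ∈ U → B ∈ U → A ∩ B ∈ U := by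
    intro A B hA hB
    have h2 : (#Bool) < κ := lt_trans (Cardinal.lt_aleph0_of_finite Bool) hκ
    have := h_complete Bool (fun b => if b then A else B) ⟨true⟩ h2
      (by intro b; cases b <;> simpa)
    have heq : (⋂ b : Bool, if b then A else B) = A ∩ B := by
      ext x; simp [Set.mem_iInter, Bool.forall_bool, and_comm]
    rwa [heq] at this
  have hne : ∀ A : Set {α : Ordinal // α < κ.ord}, A ∈ U → A.Nonempty := by
    intro A hA
    rcases Set.eq_empty_or_nonempty A with rfl | h
    · exact absurd hA h_proper
    · exact h
  -- diagonal intersection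
  have diag : ∀ F : {α : Ordinal // α < κ.ord} → Set {α : Ordinal // α < κ.ord}, (∀ α, F α ∈ U) →
      {β : {α : Ordinal // α < κ.ord} | ∀ α : {α : Ordinal // α < κ.ord}, α.1 < β.1 → β ∈ F α} ∈ U := by
    intro F hF
    by_contra hD
    have hDc : {β : {α : Ordinal // α < κ.ord} | ∀ α : {α : Ordinal // α < κ.ord}, α.1 < β.1 → β ∈ F α}ᶜ ∈ U :=
      (h_ultra _).resolve_left hD
    have hch : ∀ β : {α : Ordinal // α < κ.ord}, β ∈ {β : {α : Ordinal // α < κ.ord} | ∀ α : {α : Ordinal // α < κ.ord}, α.1 < β.1 → β ∈ F α}ᶜ →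
        ∃ α : {α : Ordinal // α < κ.ord}, α.1 < β.1 ∧ β ∉ F α := by
      intro β hβ
      simp only [Set.mem_compl_iff, Set.mem_setOf_eq, not_forall] at hβ
      obtain ⟨α, hα, hβα⟩ := hβ
      exact ⟨α, hα, hβα⟩
    choose! g hg1 hg2 using hch
    obtain ⟨γ, hγ⟩ := h_normal (fun β => (g β).1) _ hDc
      (fun β hβ _ => hg1 β hβ)
    obtain ⟨β₀, hβ₀⟩ := hne _ hγ
    have hγκ : γ < κ.ord := hβ₀.2 ▸ (g β₀).2
    set α₀ : {α : Ordinal // α < κ.ord} := ⟨γ, hγκ⟩ with hα₀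
    have hSF : {β : {α : Ordinal // α < κ.ord} | β ∈ {β : {α : Ordinal // α < κ.ord} | ∀ α : {α : Ordinal // α < κ.ord}, α.1 < β.1 → β ∈ F α}ᶜ ∧ (g β).1 = γ}
        ∩ F α₀ ∈ U := hinter _ _ hγ (hF α₀)
    obtain ⟨β, hβS, hβF⟩ := hne _ hSF
    have : g β = α₀ := Subtype.ext hβS.2
    exact hg2 β hβS.1 (this ▸ hβF)
  -- key lemma: homogeneity for each fixed cardinality
  have key : ∀ n : ℕ, ∀ F : Finset {α : Ordinal // α < κ.ord} → Fin 2, ∃ H ∈ U, ∃ c : Fin 2,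
      ∀ s : Finset {α : Ordinal // α < κ.ord}, ↑s ⊆ H → s.card = n → F s = c := by
    intro n
    induction n with
    | zero =>
      intro F
      refine ⟨Set.univ, huniv, F ∅, fun s _ hs => ?_⟩
      rw [Finset.card_eq_zero.mp hs]
    | succ n ih =>
      intro F
      have h1 : ∀ α : {α : Ordinal // α < κ.ord}, ∃ H ∈ U, ∃ c, ∀ s : Finset {α : Ordinal // α < κ.ord}, ↑s ⊆ H → s.card = n →
          F (insert α s) = c := fun α => ih (fun s => F (insert α s))
      choose Hf hHf c hc using h1
      obtain ⟨c₀, hc₀⟩ : ∃ c₀, {α : {α : Ordinal // α < κ.ord} | c α = c₀} ∈ U := by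
        rcases h_ultra {α : {α : Ordinal // α < κ.ord} | c α = 0} with h | h
        · exact ⟨0, h⟩
        · refine ⟨1, h_up _ _ h ?_⟩
          intro α hα
          simp only [Set.mem_compl_iff, Set.mem_setOf_eq] at hα ⊢
          omega
      have hD := diag Hf hHf
      refine ⟨{α : {α : Ordinal // α < κ.ord} | c α = c₀} ∩ {β : {α : Ordinal // α < κ.ord} | ∀ α : {α : Ordinal // α < κ.ord}, α.1 < β.1 → β ∈ Hf α},
        hinter _ _ hc₀ hD, c₀, ?_⟩
      intro s hs hcard
      have hsne : s.Nonempty := Finset.card_pos.mp (by omega)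
      set a := s.min' hsne with ha'
      have ha : a ∈ s := s.min'_mem hsne
      have hins : insert a (s.erase a) = s := Finset.insert_erase ha
      have htcard : (s.erase a).card = n := by
        rw [Finset.card_erase_of_mem ha, hcard]; omega
      have htsub : ↑(s.erase a) ⊆ Hf a := by
        intro β hβ
        have hβe : β ∈ s.erase a := hβ
        have hβs : β ∈ s := Finset.mem_of_mem_erase hβe
        have halt : a < β :=
          lt_of_le_of_ne (s.min'_le β hβs) (Finset.ne_of_mem_erase hβe).symm
        exact (hs hβs).2 a halt
      have hFc : F (insert a (s.erase a)) = c a := hc a (s.erase a) htsub htcard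
      rw [hins] at hFc
      rw [hFc]
      exact (hs ha).1
  choose H hH cc hcc using fun n => key n f
  refine ⟨⋂ n, H n, h_complete ℕ H ⟨0⟩ (by simpa using hκ) hH, cc, ?_⟩
  intro s hs
  exact hcc s.card s (fun β hβ => Set.mem_iInter.mp (hs hβ) s.card) rfl
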